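/- Let Ω be a measurable space and P an arbitrary set of probability measures on Ω, regarded as a subset of the real vector space of finite signed measures on Ω, with convexHull(P) taken in that space. Let S : P → (Ω → ℝ) be a scoring rule such that for every p ∈ P the function S(p) is measurable and integrable with respect to every q ∈ P. Then S is proper (∫ S(q) dp ≤ ∫ S(p) dp for all p, q ∈ P) if and only if there exist a convex function G : convexHull(P) → ℝ and, for each p ∈ P, a measurable function G_p : Ω → ℝ integrable with respect to every measure in convexHull(P), such that (i) for every μ ∈ convexHull(P), G(μ) ≥ G(p) + ∫ G_p dμ − ∫ G_p dp (i.e. the linear functional μ ↦ ∫ G_p dμ is a subgradient of G at p), and (ii) S(p)(ω) = G(p) + G_p(ω) − ∫ G_p dp for all ω ∈ Ω. -/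

import Mathlib

open MeasureTheory

/-- Integral of a real function against a finite signed measure, via the Jordan
decomposition. -/
noncomputable def signedIntegral {Ω : Type*} [MeasurableSpace Ω]
    (μ : SignedMeasure Ω) (f : Ω → ℝ) : ℝ :=
  (∫ x, f x ∂μ.toJordanDecomposition.posPart) -
    ∫ x, f x ∂μ.toJordanDecomposition.negPart

/-- Integrability of a real function with respect to a finite signed measure. -/
def SignedIntegrable {Ω : Type*} [MeasurableSpace Ω]
    (f : Ω → ℝ) (μ : SignedMeasure Ω) : Prop :=
  Integrable f μ.toJordanDecomposition.posPart ∧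
    Integrable f μ.toJordanDecomposition.negPart


open scoped NNReal ENNReal

section Aux

variable {Ω : Type*} [MeasurableSpace Ω]

lemma aux_jordan_toSM (ν : Measure Ω) [IsFiniteMeasure ν] :
    ν.toSignedMeasure.toJordanDecomposition
      = ⟨ν, 0, Measure.MutuallySingular.zero_right⟩ := by
  apply SignedMeasure.toJordanDecomposition_eq
  simp [JordanDecomposition.toSignedMeasure]

lemma aux_signedIntegral_toSM (ν : Measure Ω) [IsFiniteMeasure ν] (f : Ω → ℝ) :
    signedIntegral ν.toSignedMeasure f = ∫ x, f x ∂ν := by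
  rw [signedIntegral, aux_jordan_toSM]
  simp

lemma aux_signedIntegrable_toSM {ν : Measure Ω} [IsFiniteMeasure ν] {f : Ω → ℝ}
    (h : Integrable f ν) : SignedIntegrable f ν.toSignedMeasure := by
  rw [SignedIntegrable, aux_jordan_toSM]
  exact ⟨h, integrable_zero_measure⟩

lemma aux_toSM_congr {μ ν : Measure Ω} [IsFiniteMeasure μ] [IsFiniteMeasure ν] (h : μ = ν) :
    μ.toSignedMeasure = ν.toSignedMeasure := by
  subst h; rfl

lemma aux_smul_toSM (a : ℝ) (ha : 0 ≤ a) (ν : Measure Ω) [IsFiniteMeasure ν] :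
    a • ν.toSignedMeasure = (a.toNNReal • ν).toSignedMeasure := by
  rw [Measure.toSignedMeasure_smul]
  ext i hi
  simp [NNReal.smul_def, Real.coe_toNNReal _ ha]

lemma aux_isFiniteMeasure_sum {ι : Type*} (t : Finset ι) (ν : ι → Measure Ω)
    [∀ i, IsFiniteMeasure (ν i)] : IsFiniteMeasure (∑ i ∈ t, ν i) := by
  classical
  induction t using Finset.induction_on with
  | empty => simpa using (inferInstance : IsFiniteMeasure (0 : Measure Ω))
  | insert _ _ hni ih =>
      rw [Finset.sum_insert hni]
      exact @MeasureTheory.isFiniteMeasureAdd _ _ _ _ _ ih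

lemma aux_sum_smul_toSM {ι : Type*} (t : Finset ι) (w : ι → ℝ) (hw : ∀ i ∈ t, 0 ≤ w i)
    (ν : ι → Measure Ω) [∀ i, IsFiniteMeasure (ν i)] :
    ∑ i ∈ t, w i • (ν i).toSignedMeasure
      = (∑ i ∈ t, (w i).toNNReal • ν i).toSignedMeasure := by
  classical
  induction t using Finset.induction_on with
  | empty => simp
  | @insert j s hns ih =>
      haveI := aux_isFiniteMeasure_sum s (fun i => (w i).toNNReal • ν i)
      haveI := aux_isFiniteMeasure_sum (insert j s) (fun i => (w i).toNNReal • ν i)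
      rw [Finset.sum_insert hns,
        ih (fun i hi => hw i (Finset.mem_insert_of_mem hi)),
        aux_smul_toSM (w j) (hw j (Finset.mem_insert_self j s)),
        ← Measure.toSignedMeasure_add]
      exact aux_toSM_congr (Finset.sum_insert (f := fun i => (w i).toNNReal • ν i) hns).symm

lemma aux_integrable_combo {ι : Type*} (t : Finset ι) (w : ι → ℝ) (ν : ι → Measure Ω)
    [∀ i, IsFiniteMeasure (ν i)] {g : Ω → ℝ} (hg : ∀ i ∈ t, Integrable g (ν i)) :
    Integrable g (∑ i ∈ t, (w i).toNNReal • ν i) := by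
  refine integrable_finset_sum_measure.2 fun i hi => ?_
  exact (hg i hi).smul_measure (c := ((w i).toNNReal : ℝ≥0∞)) ENNReal.coe_ne_top

lemma aux_integral_combo {ι : Type*} (t : Finset ι) (w : ι → ℝ) (hw : ∀ i ∈ t, 0 ≤ w i)
    (ν : ι → Measure Ω) [∀ i, IsFiniteMeasure (ν i)] {g : Ω → ℝ}
    (hg : ∀ i ∈ t, Integrable g (ν i)) :
    ∫ x, g x ∂(∑ i ∈ t, (w i).toNNReal • ν i) = ∑ i ∈ t, w i * ∫ x, g x ∂(ν i) := by
  have h1 : ∀ i ∈ t, Integrable g ((w i).toNNReal • ν i) := fun i hi =>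
    (hg i hi).smul_measure (c := ((w i).toNNReal : ℝ≥0∞)) ENNReal.coe_ne_top
  rw [integral_finset_sum_measure h1]
  refine Finset.sum_congr rfl fun i hi => ?_
  rw [integral_smul_nnreal_measure]
  simp [NNReal.smul_def, Real.coe_toNNReal _ (hw i hi)]

lemma aux_hull_repr {P : Set (ProbabilityMeasure Ω)} (hP : P.Nonempty) {μ : SignedMeasure Ω}
    (hμ : μ ∈ convexHull ℝ
      ((fun p : ProbabilityMeasure Ω => (p : Measure Ω).toSignedMeasure) '' P)) :
    ∃ (ι : Type) (t : Finset ι) (w : ι → ℝ) (q : ι → ProbabilityMeasure Ω),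
      (∀ i ∈ t, 0 ≤ w i) ∧ (∑ i ∈ t, w i = 1) ∧ (∀ i ∈ t, q i ∈ P) ∧
      μ = ∑ i ∈ t, w i • ((q i : Measure Ω)).toSignedMeasure := by
  rw [convexHull_eq] at hμ
  obtain ⟨ι, t, w, z, hw0, hw1, hz, hcm⟩ := hμ
  have hq : ∀ i, ∃ p : ProbabilityMeasure Ω,
      i ∈ t → p ∈ P ∧ ((p : Measure Ω)).toSignedMeasure = z i := by
    intro i
    by_cases hi : i ∈ t
    · obtain ⟨p, hp, hpz⟩ := hz i hi
      exact ⟨p, fun _ => ⟨hp, hpz⟩⟩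
    · exact ⟨hP.choose, fun h => absurd h hi⟩
  choose q hqspec using hq
  refine ⟨ι, t, w, q, hw0, hw1, fun i hi => (hqspec i hi).1, ?_⟩
  rw [← hcm, Finset.centerMass_eq_of_sum_1 _ _ hw1]
  exact (Finset.sum_congr rfl fun i hi => by rw [(hqspec i hi).2]).symm

lemma aux_integral_affine (p : Measure Ω) [IsProbabilityMeasure p] {g : Ω → ℝ} (a c : ℝ)
    (hg : Integrable g p) : ∫ ω, (a + g ω - c) ∂p = a + (∫ ω, g ω ∂p) - c := by
  have h : (fun ω => a + g ω - c) = fun ω => g ω + (a - c) := by ext ω; ring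
  rw [h, integral_add hg (integrable_const _), integral_const]
  simp
  ring

end Aux

/-- Characterization of proper scoring rules on an arbitrary (possibly non-convex) set
of probability measures `P`, with convex combinations taken in the space of finite
signed measures. -/
theorem proper_scoring_rule_characterization {Ω : Type*} [MeasurableSpace Ω]
    (P : Set (ProbabilityMeasure Ω)) (hP : P.Nonempty)
    (S : ProbabilityMeasure Ω → Ω → ℝ)
    (hSmeas : ∀ p ∈ P, Measurable (S p))
    (hSint : ∀ p ∈ P, ∀ q ∈ P, Integrable (S p) (q : Measure Ω)) :
    (∀ p ∈ P, ∀ q ∈ P, (∫ ω, S q ω ∂(p : Measure Ω)) ≤ ∫ ω, S p ω ∂(p : Measure Ω)) ↔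
    ∃ (G : SignedMeasure Ω → ℝ) (Gsub : ProbabilityMeasure Ω → Ω → ℝ),
      ConvexOn ℝ
        (convexHull ℝ ((fun p : ProbabilityMeasure Ω => (p : Measure Ω).toSignedMeasure) '' P))
        G ∧
      (∀ p ∈ P, Measurable (Gsub p)) ∧
      (∀ p ∈ P, ∀ μ ∈
          convexHull ℝ ((fun p : ProbabilityMeasure Ω => (p : Measure Ω).toSignedMeasure) '' P),
        SignedIntegrable (Gsub p) μ) ∧
      (∀ p ∈ P, ∀ μ ∈
          convexHull ℝ ((fun p : ProbabilityMeasure Ω => (p : Measure Ω).toSignedMeasure) '' P),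
        G ((p : Measure Ω).toSignedMeasure) + signedIntegral μ (Gsub p)
            - ∫ ω, Gsub p ω ∂(p : Measure Ω) ≤ G μ) ∧
      (∀ p ∈ P, ∀ ω : Ω,
        S p ω = G ((p : Measure Ω).toSignedMeasure) + Gsub p ω
            - ∫ ω', Gsub p ω' ∂(p : Measure Ω)) := by
  classical
  constructor
  · intro hprop
    set G : SignedMeasure Ω → ℝ :=
      fun μ => sSup ((fun p => signedIntegral μ (S p)) '' P) with hG
    have key : ∀ μ ∈ convexHull ℝ
        ((fun p : ProbabilityMeasure Ω => (p : Measure Ω).toSignedMeasure) '' P),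
        ∃ (ν : Measure Ω) (_ : IsFiniteMeasure ν),
        μ = ν.toSignedMeasure ∧
        (∀ p ∈ P, Integrable (S p) ν) ∧
        (∃ B : ℝ, ∀ p ∈ P, (∫ x, S p x ∂ν) ≤ B) := by
      intro μ hμ
      obtain ⟨ι, t, w, q, hw0, hw1, hqP, hrepr⟩ := aux_hull_repr hP hμ
      haveI := aux_isFiniteMeasure_sum t (fun i => (w i).toNNReal • ((q i : Measure Ω)))
      refine ⟨∑ i ∈ t, (w i).toNNReal • ((q i : Measure Ω)), inferInstance, ?_, ?_, ?_⟩
      · rw [hrepr, aux_sum_smul_toSM t w hw0]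
      · intro p hp
        exact aux_integrable_combo t w _ fun i hi => hSint p hp (q i) (hqP i hi)
      · refine ⟨∑ i ∈ t, w i * ∫ x, S (q i) x ∂(q i : Measure Ω), fun p hp => ?_⟩
        rw [aux_integral_combo t w hw0 _ fun i hi => hSint p hp (q i) (hqP i hi)]
        refine Finset.sum_le_sum fun i hi => ?_
        exact mul_le_mul_of_nonneg_left (hprop (q i) (hqP i hi) p hp) (hw0 i hi)
    have hne : ∀ μ : SignedMeasure Ω,
        ((fun p => signedIntegral μ (S p)) '' P).Nonempty := fun μ => hP.image _
    have hbdd : ∀ μ ∈ convexHull ℝ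
        ((fun p : ProbabilityMeasure Ω => (p : Measure Ω).toSignedMeasure) '' P),
        BddAbove ((fun p => signedIntegral μ (S p)) '' P) := by
      intro μ hμ
      obtain ⟨ν, hfin, hμν, hint, B, hB⟩ := key μ hμ
      refine ⟨B, fun x hx => ?_⟩
      obtain ⟨p, hp, rfl⟩ := hx
      dsimp only
      rw [hμν, aux_signedIntegral_toSM]
      exact hB p hp
    have hmemH : ∀ p ∈ P, (p : Measure Ω).toSignedMeasure ∈ convexHull ℝ
        ((fun p : ProbabilityMeasure Ω => (p : Measure Ω).toSignedMeasure) '' P) :=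
      fun p hp => subset_convexHull ℝ _ ⟨p, hp, rfl⟩
    have hleG : ∀ μ ∈ convexHull ℝ
        ((fun p : ProbabilityMeasure Ω => (p : Measure Ω).toSignedMeasure) '' P),
        ∀ p ∈ P, signedIntegral μ (S p) ≤ G μ := by
      intro μ hμ p hp
      exact le_csSup (hbdd μ hμ) ⟨p, hp, rfl⟩
    have hGeq : ∀ p ∈ P, G ((p : Measure Ω).toSignedMeasure)
        = ∫ ω, S p ω ∂(p : Measure Ω) := by
      intro p hp
      refine le_antisymm (csSup_le (hne _) ?_) ?_
      · rintro x ⟨r, hr, rfl⟩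
        dsimp only
        rw [aux_signedIntegral_toSM]
        exact hprop p hp r hr
      · refine le_csSup (hbdd _ (hmemH p hp)) ⟨p, hp, ?_⟩
        dsimp only
        rw [aux_signedIntegral_toSM]
    refine ⟨G, S, ⟨convex_convexHull ℝ _, ?_⟩, hSmeas, ?_, ?_, ?_⟩
    · -- convexity inequality
      intro μ hμ ν hν a b ha hb hab
      obtain ⟨ν₁, hfin₁, hμν₁, hint₁, -⟩ := key μ hμ
      obtain ⟨ν₂, hfin₂, hμν₂, hint₂, -⟩ := key ν hν
      haveI : IsFiniteMeasure (a.toNNReal • ν₁ + b.toNNReal • ν₂) := inferInstance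
      have hcombo : a • μ + b • ν = (a.toNNReal • ν₁ + b.toNNReal • ν₂).toSignedMeasure := by
        rw [hμν₁, hμν₂, aux_smul_toSM a ha, aux_smul_toSM b hb,
          Measure.toSignedMeasure_add]
      rw [smul_eq_mul, smul_eq_mul]
      refine csSup_le (hne _) ?_
      rintro x ⟨p, hp, rfl⟩
      have hi₁ : Integrable (S p) (a.toNNReal • ν₁) :=
        (hint₁ p hp).smul_measure (c := (a.toNNReal : ℝ≥0∞)) ENNReal.coe_ne_top
      have hi₂ : Integrable (S p) (b.toNNReal • ν₂) :=
        (hint₂ p hp).smul_measure (c := (b.toNNReal : ℝ≥0∞)) ENNReal.coe_ne_top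
      have heq : signedIntegral (a • μ + b • ν) (S p)
          = a * signedIntegral μ (S p) + b * signedIntegral ν (S p) := by
        rw [hcombo, aux_signedIntegral_toSM, integral_add_measure hi₁ hi₂,
          hμν₁, hμν₂, aux_signedIntegral_toSM, aux_signedIntegral_toSM,
          integral_smul_nnreal_measure, integral_smul_nnreal_measure]
        simp [NNReal.smul_def, Real.coe_toNNReal _ ha, Real.coe_toNNReal _ hb]
      dsimp only
      rw [heq]
      have h1 : a * signedIntegral μ (S p) ≤ a * G μ :=
        mul_le_mul_of_nonneg_left (hleG μ hμ p hp) ha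
      have h2 : b * signedIntegral ν (S p) ≤ b * G ν :=
        mul_le_mul_of_nonneg_left (hleG ν hν p hp) hb
      linarith
    · -- signed integrability
      intro p hp μ hμ
      obtain ⟨ν, hfin, hμν, hint, -⟩ := key μ hμ
      rw [hμν]
      exact aux_signedIntegrable_toSM (hint p hp)
    · -- subgradient inequality
      intro p hp μ hμ
      have h1 := hleG μ hμ p hp
      rw [hGeq p hp]
      linarith
    · -- representation
      intro p hp ω
      rw [hGeq p hp]
      ring
  · -- converse direction
    rintro ⟨G, Gsub, hconv, hGmeas, hGint, hsub, hrep⟩ p hp q hq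
    have hmemp : (p : Measure Ω).toSignedMeasure ∈ convexHull ℝ
        ((fun p : ProbabilityMeasure Ω => (p : Measure Ω).toSignedMeasure) '' P) :=
      subset_convexHull ℝ _ ⟨p, hp, rfl⟩
    have hintp : ∀ r ∈ P, Integrable (Gsub r) (p : Measure Ω) := by
      intro r hr
      have h := (hGint r hr _ hmemp).1
      rwa [aux_jordan_toSM] at h
    have hval : ∀ r ∈ P, (∫ ω, S r ω ∂(p : Measure Ω))
        = G ((r : Measure Ω).toSignedMeasure) + (∫ ω, Gsub r ω ∂(p : Measure Ω))
          - ∫ ω, Gsub r ω ∂(r : Measure Ω) := by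
      intro r hr
      have h : (fun ω => S r ω) = fun ω =>
          G ((r : Measure Ω).toSignedMeasure) + Gsub r ω
            - ∫ ω', Gsub r ω' ∂(r : Measure Ω) := by
        ext ω; exact hrep r hr ω
      rw [h, aux_integral_affine _ _ _ (hintp r hr)]
    have hsubq := hsub q hq _ hmemp
    rw [aux_signedIntegral_toSM] at hsubq
    rw [hval q hq, hval p hp]
    linarith
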